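/- arXiv:1210.3841 — 5 statements merged into one kernel-verified Lean document; each statement's English description precedes it below -/
import Mathlib

section
/- For any integers s, t, α, β, the sum over all integers j of C(s+α+j, α+j)·C(t+β−j, β−j) equals C(s+t+α+β+1, α+β). (The sum is essentially finite.) -/
/-- Generalized binomial coefficient `C(s,a)` for integers `s, a`:
`C(s,a) = s(s-1)⋯(s-a+1)/a!` if `a ≥ 0`, and `0` if `a < 0`. -/
noncomputable def C (s a : ℤ) : ℚ :=
  if a < 0 then 0 else (∏ i ∈ Finset.range a.toNat, ((s : ℚ) - i)) / (a.toNat.factorial : ℚ)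

/-- Binomial coefficient with rational upper argument and natural lower argument. -/
noncomputable def Cq (x : ℚ) (k : ℕ) : ℚ :=
  (∏ i ∈ Finset.range k, (x - i)) / (k.factorial : ℚ)

lemma C_of_neg {s a : ℤ} (h : a < 0) : C s a = 0 := by simp [C, h]

lemma C_natCast (s : ℤ) (k : ℕ) : C s (k : ℤ) = Cq (s : ℚ) k := by
  simp [C, Cq]

@[simp] lemma Cq_zero (x : ℚ) : Cq x 0 = 1 := by simp [Cq]

/-- Absorption identity. -/
lemma Cq_absorb (x : ℚ) (k : ℕ) :
    ((k : ℚ) + 1) * Cq x (k + 1) = x * Cq (x - 1) k := by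
  have hprod : (∏ i ∈ Finset.range (k + 1), (x - i))
      = (∏ i ∈ Finset.range k, (x - 1 - i)) * x := by
    rw [Finset.prod_range_succ']
    congr 1
    · apply Finset.prod_congr rfl
      intro i _
      push_cast
      ring
    · simp
  have hk : (k.factorial : ℚ) ≠ 0 := by exact_mod_cast k.factorial_ne_zero
  have hk1 : ((k : ℚ) + 1) ≠ 0 := by positivity
  simp only [Cq, hprod, Nat.factorial_succ]
  push_cast
  field_simp

/-- Reflection (upper negation) identity. -/
lemma Cq_reflect (x : ℚ) (k : ℕ) :
    Cq x k = (-1) ^ k * Cq ((k : ℚ) - x - 1) k := by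
  have hprod : (∏ i ∈ Finset.range k, (x - i))
      = (-1) ^ k * ∏ i ∈ Finset.range k, ((k : ℚ) - x - 1 - i) := by
    rw [← Finset.prod_range_reflect (fun j => x - (j : ℚ)) k,
      show ((-1 : ℚ) ^ k) = ∏ _i ∈ Finset.range k, (-1 : ℚ) by simp,
      ← Finset.prod_mul_distrib]
    apply Finset.prod_congr rfl
    intro i hi
    rw [Finset.mem_range] at hi
    have hc : ((k - 1 - i : ℕ) : ℚ) = (k : ℚ) - 1 - i := by
      have h : ((k - 1 - i : ℕ) : ℤ) = (k : ℤ) - 1 - i := by omega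
      exact_mod_cast h
    rw [hc]
    ring
  simp only [Cq, hprod]
  ring

/-- Chu–Vandermonde for rational upper arguments. -/
lemma Cq_vandermonde (n : ℕ) (x y : ℚ) :
    ∑ k ∈ Finset.range (n + 1), Cq x k * Cq y (n - k) = Cq (x + y) n := by
  induction n generalizing x y with
  | zero => simp
  | succ n ih =>
    have hne : ((n : ℚ) + 1) ≠ 0 := by positivity
    apply mul_left_cancel₀ hne
    have hsplit : ((n : ℚ) + 1) * ∑ k ∈ Finset.range (n + 1 + 1), Cq x k * Cq y (n + 1 - k)
        = (∑ k ∈ Finset.range (n + 1 + 1), (k : ℚ) * Cq x k * Cq y (n + 1 - k))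
          + ∑ k ∈ Finset.range (n + 1 + 1), ((n + 1 - k : ℕ) : ℚ) * Cq x k * Cq y (n + 1 - k) := by
      rw [Finset.mul_sum, ← Finset.sum_add_distrib]
      apply Finset.sum_congr rfl
      intro k hk
      rw [Finset.mem_range] at hk
      have hc : ((n + 1 - k : ℕ) : ℚ) = (n : ℚ) + 1 - k := by
        have h : ((n + 1 - k : ℕ) : ℤ) = (n : ℤ) + 1 - k := by omega
        exact_mod_cast h
      rw [hc]
      ring
    have hS1 : (∑ k ∈ Finset.range (n + 1 + 1), (k : ℚ) * Cq x k * Cq y (n + 1 - k))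
        = x * Cq (x - 1 + y) n := by
      rw [Finset.sum_range_succ']
      have hcongr : ∀ i ∈ Finset.range (n + 1),
          ((i + 1 : ℕ) : ℚ) * Cq x (i + 1) * Cq y (n + 1 - (i + 1))
          = x * (Cq (x - 1) i * Cq y (n - i)) := by
        intro i _
        have h1 : n + 1 - (i + 1) = n - i := by omega
        rw [h1]
        push_cast
        linear_combination Cq y (n - i) * Cq_absorb x i
      rw [Finset.sum_congr rfl hcongr, ← Finset.mul_sum, ih]
      simp
    have hS2 : (∑ k ∈ Finset.range (n + 1 + 1), ((n + 1 - k : ℕ) : ℚ) * Cq x k * Cq y (n + 1 - k))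
        = y * Cq (x + (y - 1)) n := by
      rw [Finset.sum_range_succ]
      have hcongr : ∀ k ∈ Finset.range (n + 1),
          ((n + 1 - k : ℕ) : ℚ) * Cq x k * Cq y (n + 1 - k)
          = y * (Cq x k * Cq (y - 1) (n - k)) := by
        intro k hk
        rw [Finset.mem_range] at hk
        have h1 : n + 1 - k = (n - k) + 1 := by omega
        rw [h1]
        push_cast [show n + 1 - k = n - k + 1 from h1]
        linear_combination Cq x k * Cq_absorb y (n - k)
      rw [Finset.sum_congr rfl hcongr, ← Finset.mul_sum, ih]
      simp
    rw [hsplit, hS1, hS2]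
    have habs := Cq_absorb (x + y) n
    have h1 : x - 1 + y = x + y - 1 := by ring
    have h2 : x + (y - 1) = x + y - 1 := by ring
    rw [h1, h2]
    linear_combination -habs

/-- Chu–Vandermonde in the form needed. -/
lemma chu_nat (N : ℕ) (x y : ℚ) :
    ∑ k ∈ Finset.range (N + 1), Cq (x + k) k * Cq (y + ((N - k : ℕ) : ℚ)) (N - k)
      = Cq (x + y + N + 1) N := by
  have hterm : ∀ k ∈ Finset.range (N + 1),
      Cq (x + k) k * Cq (y + ((N - k : ℕ) : ℚ)) (N - k)
      = (-1) ^ N * (Cq (-x - 1) k * Cq (-y - 1) (N - k)) := by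
    intro k hk
    rw [Finset.mem_range] at hk
    have h1 : Cq (x + k) k = (-1) ^ k * Cq (-x - 1) k := by
      rw [Cq_reflect (x + k) k]
      congr 2
      ring
    have h2 : Cq (y + ((N - k : ℕ) : ℚ)) (N - k) = (-1) ^ (N - k) * Cq (-y - 1) (N - k) := by
      rw [Cq_reflect (y + ((N - k : ℕ) : ℚ)) (N - k)]
      congr 2
      ring
    rw [h1, h2]
    have : (-1 : ℚ) ^ k * (-1 : ℚ) ^ (N - k) = (-1) ^ N := by
      rw [← pow_add]
      congr 1
      omega
    calc (-1 : ℚ) ^ k * Cq (-x - 1) k * ((-1) ^ (N - k) * Cq (-y - 1) (N - k))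
        = ((-1 : ℚ) ^ k * (-1) ^ (N - k)) * (Cq (-x - 1) k * Cq (-y - 1) (N - k)) := by ring
      _ = (-1) ^ N * (Cq (-x - 1) k * Cq (-y - 1) (N - k)) := by rw [this]
  rw [Finset.sum_congr rfl hterm, ← Finset.mul_sum, Cq_vandermonde]
  rw [Cq_reflect (x + y + N + 1) N]
  congr 2
  ring

theorem chu_vandermonde' (s t α β : ℤ) :
    (∑ᶠ j : ℤ, C (s + α + j) (α + j) * C (t + β - j) (β - j))
      = C (s + t + α + β + 1) (α + β) := by
  set f : ℤ → ℚ := fun j => C (s + α + j) (α + j) * C (t + β - j) (β - j) with hf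
  have hzero : ∀ j : ℤ, j < -α ∨ β < j → f j = 0 := by
    intro j hj
    rcases hj with hj | hj
    · simp [hf, C_of_neg (show α + j < 0 by omega)]
    · simp [hf, C_of_neg (show β - j < 0 by omega)]
  by_cases hn : α + β < 0
  · have h0 : ∀ j : ℤ, f j = 0 := by
      intro j
      rcases lt_or_ge j (-α) with h | h
      · exact hzero j (Or.inl h)
      · exact hzero j (Or.inr (by omega))
    rw [C_of_neg hn]
    calc (∑ᶠ j : ℤ, f j) = ∑ᶠ _ : ℤ, (0 : ℚ) := finsum_congr h0
      _ = 0 := finsum_zero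
  · push_neg at hn
    set N : ℕ := (α + β).toNat with hN
    have hNcast : ((N : ℤ)) = α + β := Int.toNat_of_nonneg hn
    have hsupp : Function.support f ⊆ (Finset.Icc (-α) β : Finset ℤ) := by
      intro j hj
      simp only [Function.mem_support] at hj
      simp only [Finset.coe_Icc, Set.mem_Icc]
      by_contra hc
      push_neg at hc
      rcases le_or_gt (-α) j with h | h
      · exact hj (hzero j (Or.inr (hc h)))
      · exact hj (hzero j (Or.inl h))
    rw [finsum_eq_sum_of_support_subset f hsupp]
    have hbij : ∑ j ∈ Finset.Icc (-α) β, f j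
        = ∑ k ∈ Finset.range (N + 1), f ((k : ℤ) - α) := by
      apply Finset.sum_nbij' (fun j => (α + j).toNat) (fun k => (k : ℤ) - α)
      · intro j hj
        simp only [Finset.mem_Icc] at hj
        simp only [Finset.mem_range]
        omega
      · intro k hk
        simp only [Finset.mem_range] at hk
        simp only [Finset.mem_Icc]
        omega
      · intro j hj
        simp only [Finset.mem_Icc] at hj
        omega
      · intro k hk
        simp only [Finset.mem_range] at hk
        omega
      · intro j hj
        simp only [Finset.mem_Icc] at hj
        congr 1
        omega
    rw [hbij]
    have hterm : ∀ k ∈ Finset.range (N + 1),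
        f ((k : ℤ) - α)
        = Cq ((s : ℚ) + k) k * Cq ((t : ℚ) + ((N - k : ℕ) : ℚ)) (N - k) := by
      intro k hk
      rw [Finset.mem_range] at hk
      have h1 : α + ((k : ℤ) - α) = (k : ℤ) := by ring
      have h2 : β - ((k : ℤ) - α) = ((N - k : ℕ) : ℤ) := by omega
      simp only [hf, h1, h2]
      rw [show s + α + ((k : ℤ) - α) = s + (k : ℤ) by ring,
        show t + β - ((k : ℤ) - α) = t + ((N - k : ℕ) : ℤ) by omega,
        C_natCast, C_natCast]
      push_cast
      ring_nf
    rw [Finset.sum_congr rfl hterm, chu_nat N (s : ℚ) (t : ℚ)]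
    have h3 : s + t + α + β + 1 = ((N : ℤ)) + (s + t + 1) := by omega
    have h4 : (0 : ℤ) ≤ α + β := hn
    rw [show (α + β : ℤ) = (N : ℤ) by omega, show s + t + α + β + 1 = s + t + (N : ℤ) + 1 by omega,
      show s + t + (N : ℤ) + 1 = ((s + t + (N : ℤ) + 1 : ℤ)) from rfl]
    rw [C_natCast (s + t + (N : ℤ) + 1) N]
    push_cast
    ring_nf
end

section
/- Let a, a', e, e' be integers with a ≤ e and a' ≤ e', and let k be a nonnegative integer. The number of lattice paths from (a, a') to (e, e') having exactly k NE-turns equals C(e−a, k)·C(e'−a', k). -/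
/-- A lattice path from `A` to `E` is a nonempty finite sequence of points in `ℤ²`
starting at `A`, ending at `E`, each step being `(1,0)` or `(0,1)`. -/
def IsLatticePath (A E : ℤ × ℤ) (P : List (ℤ × ℤ)) : Prop :=
  P.head? = some A ∧ P.getLast? = some E ∧
    List.Chain' (fun p q : ℤ × ℤ => q - p = (1, 0) ∨ q - p = (0, 1)) P

/-- The number of NE-turns of a lattice path `P = (P_0, …, P_t)`: indices `j` with
`0 < j < t`, `P_j - P_{j-1} = (0,1)` and `P_{j+1} - P_j = (1,0)`. -/
def numNETurns (P : List (ℤ × ℤ)) : ℕ :=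
  ((Finset.range P.length).filter (fun j =>
    0 < j ∧ j + 1 < P.length ∧
      P.getD j (0, 0) - P.getD (j - 1) (0, 0) = ((0 : ℤ), (1 : ℤ)) ∧
      P.getD (j + 1) (0, 0) - P.getD j (0, 0) = ((1 : ℤ), (0 : ℤ)))).card

/-- the step of a letter -/
def stp (b : Bool) : ℤ × ℤ := if b then (0,1) else (1,0)

/-- path determined by start point and word of steps -/
def pathOf (A : ℤ × ℤ) (w : List Bool) : List (ℤ × ℤ) :=
  w.scanl (fun p b => p + stp b) A

/-- number of NE (true-false) descents of a word -/
def desc : List Bool → ℕ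
  | [] => 0
  | [_] => 0
  | a :: b :: l => desc (b :: l) + (if a = true ∧ b = false then 1 else 0)

lemma pathOf_nil (A : ℤ × ℤ) : pathOf A [] = [A] := rfl

lemma pathOf_cons (A : ℤ × ℤ) (b : Bool) (w : List Bool) :
    pathOf A (b :: w) = A :: pathOf (A + stp b) w := by
  simp [pathOf, List.scanl_cons]

lemma pathOf_ne_nil (A : ℤ × ℤ) (w : List Bool) : pathOf A w ≠ [] := by
  cases w <;> simp [pathOf_nil, pathOf_cons]

lemma pathOf_head (A : ℤ × ℤ) (w : List Bool) : (pathOf A w).head? = some A := by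
  cases w <;> simp [pathOf_nil, pathOf_cons]

lemma pathOf_getD0 (A : ℤ × ℤ) (w : List Bool) : (pathOf A w).getD 0 (0,0) = A := by
  cases w <;> simp [pathOf_nil, pathOf_cons]

lemma pathOf_getLast (A : ℤ × ℤ) (w : List Bool) :
    (pathOf A w).getLast? = some (A + ((w.count false : ℤ), (w.count true : ℤ))) := by
  induction w generalizing A with
  | nil => simp [pathOf_nil]
  | cons b w ih =>
      rw [pathOf_cons, List.getLast?_cons, ih]
      cases b <;> simp [stp, List.count_cons, Prod.ext_iff] <;> push_cast <;> ring_nf <;> simp [add_comm, add_assoc, add_left_comm]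

lemma pathOf_chain (A : ℤ × ℤ) (w : List Bool) :
    List.Chain' (fun p q : ℤ × ℤ => q - p = (1, 0) ∨ q - p = (0, 1)) (pathOf A w) := by
  induction w generalizing A with
  | nil => exact List.isChain_singleton A
  | cons b w ih =>
      rw [pathOf_cons]; unfold List.Chain'; rw [List.isChain_cons]
      refine ⟨?_, ih _⟩
      intro y hy
      rw [pathOf_head] at hy
      cases hy
      cases b <;> simp [stp]

lemma numNETurns_nil : numNETurns [] = 0 := by simp [numNETurns]

lemma numNETurns_cons (p : ℤ × ℤ) (P : List (ℤ × ℤ)) :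
    numNETurns (p :: P) = numNETurns P +
      (if 2 ≤ P.length ∧ P.getD 0 (0,0) - p = ((0:ℤ),(1:ℤ)) ∧
          P.getD 1 (0,0) - P.getD 0 (0,0) = ((1:ℤ),(0:ℤ)) then 1 else 0) := by
  classical
  unfold numNETurns
  rw [Finset.card_filter, Finset.card_filter]
  simp only [List.length_cons]
  rw [Finset.sum_range_succ']
  simp only [lt_irrefl, false_and, if_false, add_zero]
  cases P with
  | nil => simp
  | cons q Q =>
      simp only [List.length_cons]
      rw [Finset.sum_range_succ', Finset.sum_range_succ']
      simp only [lt_irrefl, false_and, if_false, add_zero]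
      congr 1
      · apply Finset.sum_congr rfl
        intro j _
        simp only [List.getD_cons_succ, List.getD_cons_zero, Nat.add_sub_cancel,
          Nat.succ_pos, true_and]
        have hiff : (j + 1 + 1 + 1 < Q.length + 1 + 1) ↔ (j + 1 + 1 < Q.length + 1) := by omega
        simp only [hiff, Nat.zero_lt_succ, true_and]
      · simp only [List.getD_cons_succ, List.getD_cons_zero, Nat.add_sub_cancel,
          Nat.lt_irrefl, Nat.zero_lt_one, true_and]
        have hiff : (0 + 1 + 1 < Q.length + 1 + 1) ↔ (2 ≤ Q.length + 1) := by omega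
        simp only [hiff, Nat.zero_lt_succ, true_and]

lemma pathOf_length (A : ℤ × ℤ) (w : List Bool) : (pathOf A w).length = w.length + 1 := by
  simp [pathOf, List.length_scanl]

lemma stp_inj : Function.Injective stp := by
  intro a b h; cases a <;> cases b <;> simp_all [stp, Prod.ext_iff]

lemma pathOf_inj (A : ℤ × ℤ) : Function.Injective (pathOf A) := by
  intro w₁ w₂ hw
  induction w₁ generalizing w₂ A with
  | nil =>
      cases w₂ with
      | nil => rfl
      | cons b w => exfalso; apply_fun List.length at hw; simp [pathOf_length] at hw
  | cons b₁ w₁ ih =>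
      cases w₂ with
      | nil => exfalso; apply_fun List.length at hw; simp [pathOf_length] at hw
      | cons b₂ w₂ =>
          rw [pathOf_cons, pathOf_cons] at hw
          have h1 := List.tail_eq_of_cons_eq hw
          have h0 : A + stp b₁ = A + stp b₂ := by
            have := congrArg List.head? h1
            simpa [pathOf_head] using this
          have hb : b₁ = b₂ := stp_inj (by exact add_left_cancel h0)
          subst hb
          rw [ih (A + stp b₁) h1]

lemma exists_word (P : List (ℤ × ℤ)) (hne : P ≠ [])
    (hch : List.Chain' (fun p q : ℤ × ℤ => q - p = (1, 0) ∨ q - p = (0, 1)) P)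
    (A : ℤ × ℤ) (hA : P.head? = some A) : ∃ w, pathOf A w = P := by
  induction P generalizing A with
  | nil => simp at hne
  | cons p Q ih =>
      have hp : p = A := by simpa using hA
      subst hp
      cases Q with
      | nil => exact ⟨[], rfl⟩
      | cons q L =>
          unfold List.Chain' at hch; rw [List.isChain_cons_cons] at hch
          obtain ⟨hstep, hch'⟩ := hch
          have hq : ∃ b, q = p + stp b := by
            rcases hstep with h | h
            · refine ⟨false, ?_⟩
              have : q = p + ((1:ℤ),(0:ℤ)) := by rw [← h]; ring
              simpa [stp] using this
            · refine ⟨true, ?_⟩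
              have : q = p + ((0:ℤ),(1:ℤ)) := by rw [← h]; ring
              simpa [stp] using this
          obtain ⟨b, hb⟩ := hq
          obtain ⟨w, hw⟩ := ih (by simp) hch' q (by simp)
          exact ⟨b :: w, by rw [pathOf_cons, ← hb, hw]⟩

lemma numNETurns_pathOf (w : List Bool) (A : ℤ × ℤ) :
    numNETurns (pathOf A w) = desc w := by
  induction w generalizing A with
  | nil =>
      rw [show pathOf A [] = [A] from rfl, numNETurns_cons]
      simp [numNETurns, desc]
  | cons b w ih =>
      rw [pathOf_cons, numNETurns_cons, ih]
      cases w with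
      | nil => simp [pathOf, desc]
      | cons c w' =>
          have hlen : 2 ≤ (pathOf (A + stp b) (c :: w')).length := by
            rw [pathOf_length]; simp
          have h0 : (pathOf (A + stp b) (c :: w')).getD 0 (0,0) = A + stp b :=
            pathOf_getD0 _ _
          have h1 : (pathOf (A + stp b) (c :: w')).getD 1 (0,0) = A + stp b + stp c := by
            rw [pathOf_cons]
            simpa using pathOf_getD0 (A + stp b + stp c) w'
          rw [h0, h1]
          simp only [hlen, true_and, add_sub_cancel_left, add_sub_cancel_left]
          have : (stp b = ((0:ℤ),(1:ℤ)) ∧ stp c = ((1:ℤ),(0:ℤ))) ↔ (b = true ∧ c = false) := by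
            cases b <;> cases c <;> simp [stp, Prod.ext_iff]
          simp only [this]
          show desc (c :: w') + _ = desc (b :: c :: w')
          rfl

lemma desc_cons_false (w : List Bool) : desc (false :: w) = desc w := by
  cases w <;> simp [desc]

lemma desc_cons_true (w : List Bool) :
    desc (true :: w) = desc w + (if w.head? = some false then 1 else 0) := by
  cases w with
  | nil => simp [desc]
  | cons c l => cases c <;> simp [desc]

def Wset (m n k : ℕ) : Set (List Bool) :=
  {w | w.count false = m ∧ w.count true = n ∧ desc w = k}

def Dset (m n k : ℕ) : Set (List Bool) :=
  {w | w ∈ Wset m n k ∧ w.head? = some false}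

def Bset (m n k : ℕ) : Set (List Bool) :=
  {w | w ∈ Wset m n k ∧ w.head? ≠ some false}

lemma count_add_count (w : List Bool) : w.count false + w.count true = w.length := by
  induction w with
  | nil => simp
  | cons b l ih => cases b <;> simp [List.count_cons] <;> omega

lemma Wset_finite (m n k : ℕ) : (Wset m n k).Finite := by
  apply (List.finite_length_eq Bool (m+n)).subset
  rintro w ⟨h1, h2, _⟩
  simp only [Set.mem_setOf_eq, ← count_add_count w, h1, h2]

lemma Dset_finite (m n k : ℕ) : (Dset m n k).Finite :=
  (Wset_finite m n k).subset (fun w hw => hw.1)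

lemma Bset_finite (m n k : ℕ) : (Bset m n k).Finite :=
  (Wset_finite m n k).subset (fun w hw => hw.1)

lemma W_card_split (m n k : ℕ) :
    (Wset m n k).ncard = (Dset m n k).ncard + (Bset m n k).ncard := by
  classical
  have : Wset m n k = Dset m n k ∪ Bset m n k := by
    ext w; simp only [Dset, Bset, Set.mem_union, Set.mem_setOf_eq]; tauto
  rw [this, Set.ncard_union_eq ?_ (Dset_finite m n k) (Bset_finite m n k)]
  rw [Set.disjoint_left]
  rintro w ⟨_, h1⟩ ⟨_, h2⟩
  exact h2 h1

lemma D_zero (n k : ℕ) : Dset 0 n k = ∅ := by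
  ext w
  simp only [Dset, Wset, Set.mem_setOf_eq, Set.mem_empty_iff_false, iff_false]
  rintro ⟨⟨h1, _, _⟩, h2⟩
  have : false ∈ w := List.mem_of_mem_head? (by rw [h2]; simp)
  rw [← List.count_pos_iff] at this
  omega

lemma D_succ (m n k : ℕ) : Dset (m+1) n k = (false :: ·) '' Wset m n k := by
  ext w
  constructor
  · rintro ⟨⟨h1, h2, h3⟩, hh⟩
    obtain ⟨b, t, rfl⟩ := List.exists_cons_of_ne_nil (show w ≠ [] by rintro rfl; simp at hh)
    have hb : b = false := by simpa using hh
    subst hb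
    refine ⟨t, ⟨?_, ?_, ?_⟩, rfl⟩
    · simpa [List.count_cons] using h1
    · simpa [List.count_cons] using h2
    · rw [← desc_cons_false t]; exact h3
  · rintro ⟨t, ⟨h1, h2, h3⟩, rfl⟩
    refine ⟨⟨?_, ?_, ?_⟩, rfl⟩
    · simp [List.count_cons, h1]
    · simpa [List.count_cons] using h2
    · rw [desc_cons_false]; exact h3

lemma B_n0 (m k : ℕ) : Bset (m+1) 0 k = ∅ := by
  ext w
  simp only [Bset, Wset, Set.mem_setOf_eq, Set.mem_empty_iff_false, iff_false]
  rintro ⟨⟨h1, h2, _⟩, hh⟩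
  obtain ⟨b, t, rfl⟩ := List.exists_cons_of_ne_nil (show w ≠ [] by rintro rfl; simp at h1)
  cases b
  · exact hh (by simp)
  · simp [List.count_cons] at h2

lemma B_head_true {m n k : ℕ} {w : List Bool} (hw : w ∈ Bset m (n+1) k) :
    ∃ t, w = true :: t := by
  obtain ⟨⟨h1, h2, h3⟩, hh⟩ := hw
  obtain ⟨b, t, rfl⟩ := List.exists_cons_of_ne_nil (show w ≠ [] by rintro rfl; simp at h2)
  cases b
  · exact absurd (by simp) hh
  · exact ⟨t, rfl⟩

lemma B_succ0 (m n : ℕ) : Bset m (n+1) 0 = (true :: ·) '' Bset m n 0 := by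
  ext w
  constructor
  · intro hw
    obtain ⟨t, rfl⟩ := B_head_true hw
    obtain ⟨⟨h1, h2, h3⟩, hh⟩ := hw
    rw [desc_cons_true] at h3
    refine ⟨t, ⟨⟨?_, ?_, ?_⟩, ?_⟩, rfl⟩
    · simpa [List.count_cons] using h1
    · simpa [List.count_cons] using h2
    · omega
    · intro hf; rw [if_pos hf] at h3; omega
  · rintro ⟨t, ⟨⟨h1, h2, h3⟩, hh⟩, rfl⟩
    refine ⟨⟨?_, ?_, ?_⟩, by simp⟩
    · simpa [List.count_cons] using h1
    · simp [List.count_cons, h2]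
    · rw [desc_cons_true, if_neg hh, h3]

lemma B_succk (m n k : ℕ) :
    Bset m (n+1) (k+1) = (true :: ·) '' (Bset m n (k+1) ∪ Dset m n k) := by
  ext w
  constructor
  · intro hw
    obtain ⟨t, rfl⟩ := B_head_true hw
    obtain ⟨⟨h1, h2, h3⟩, hh⟩ := hw
    rw [desc_cons_true] at h3
    have h1' : t.count false = m := by simpa [List.count_cons] using h1
    have h2' : t.count true = n := by simpa [List.count_cons] using h2
    by_cases hf : t.head? = some false
    · refine ⟨t, Or.inr ⟨⟨h1', h2', ?_⟩, hf⟩, rfl⟩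
      rw [if_pos hf] at h3; omega
    · refine ⟨t, Or.inl ⟨⟨h1', h2', ?_⟩, hf⟩, rfl⟩
      rw [if_neg hf] at h3; omega
  · rintro ⟨t, ht, rfl⟩
    have : t.count false = m ∧ t.count true = n ∧ desc (true :: t) = k + 1 := by
      rcases ht with ⟨⟨h1, h2, h3⟩, hh⟩ | ⟨⟨h1, h2, h3⟩, hh⟩
      · exact ⟨h1, h2, by rw [desc_cons_true, if_neg hh, h3]⟩
      · exact ⟨h1, h2, by rw [desc_cons_true, if_pos hh, h3]⟩
    refine ⟨⟨?_, ?_, this.2.2⟩, by simp⟩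
    · simpa [List.count_cons] using this.1
    · simp [List.count_cons, this.2.1]

lemma W00 (k : ℕ) : Wset 0 0 k = if k = 0 then {([] : List Bool)} else ∅ := by
  ext w
  have hlen : w ∈ Wset 0 0 k → w = [] := by
    rintro ⟨h1, h2, _⟩
    have := count_add_count w
    rw [h1, h2] at this
    exact List.length_eq_zero_iff.1 (by omega)
  by_cases hk : k = 0
  · subst hk
    simp only [if_pos rfl, Set.mem_singleton_iff]
    constructor
    · exact hlen
    · rintro rfl; exact ⟨rfl, rfl, rfl⟩
  · rw [if_neg hk]
    simp only [Set.mem_empty_iff_false, iff_false]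
    intro hw
    have := hlen hw
    subst this
    obtain ⟨_, _, h3⟩ := hw
    exact hk (by rw [← h3]; rfl)

lemma BD_disj (m n k m' n' k' : ℕ) : Disjoint (Bset m n k) (Dset m' n' k') :=
  Set.disjoint_left.2 fun w hb hd => hb.2 hd.2

def bFormula (m n k : ℕ) : ℕ :=
  if m = 0 then (if k = 0 then 1 else 0)
  else if k = 0 then 0 else Nat.choose (m-1) (k-1) * Nat.choose n k

theorem main_count (N : ℕ) : ∀ m n k, m + n = N →
    (Wset m n k).ncard = Nat.choose m k * Nat.choose n k ∧
    (Bset m n k).ncard = bFormula m n k := by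
  induction N using Nat.strong_induction_on with
  | _ N IH =>
    intro m n k hmn
    have hB : (Bset m n k).ncard = bFormula m n k := by
      cases n with
      | zero =>
          cases m with
          | zero =>
              have hBW : Bset 0 0 k = Wset 0 0 k := by
                ext w
                constructor
                · exact fun hw => hw.1
                · intro hw
                  have hw' := hw
                  rw [W00] at hw'
                  refine ⟨hw, ?_⟩
                  by_cases hk : k = 0
                  · subst hk; simp only [if_pos rfl, Set.mem_singleton_iff] at hw'
                    subst hw'; simp
                  · rw [if_neg hk] at hw'; simp at hw'
              rw [hBW, W00]
              by_cases hk : k = 0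
              · subst hk; simp [bFormula]
              · rw [if_neg hk]; simp [bFormula, hk]
          | succ m' =>
              rw [B_n0]
              simp only [Set.ncard_empty]
              rcases k with _ | k'
              · simp [bFormula]
              · simp [bFormula, Nat.choose_zero_succ]
      | succ n' =>
          rcases k with _ | k'
          · rw [B_succ0, Set.ncard_image_of_injective _ (List.cons_injective)]
            rw [(IH (m + n') (by omega) m n' 0 rfl).2]
            unfold bFormula
            by_cases hm : m = 0 <;> simp [hm]
          · rw [B_succk, Set.ncard_image_of_injective _ (List.cons_injective),
              Set.ncard_union_eq (BD_disj m n' (k'+1) m n' k')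
                (Bset_finite m n' (k'+1)) (Dset_finite m n' k')]
            rw [(IH (m + n') (by omega) m n' (k'+1) rfl).2]
            cases m with
            | zero => rw [D_zero]; simp [bFormula]
            | succ m' =>
                rw [D_succ, Set.ncard_image_of_injective _ List.cons_injective]
                rw [(IH (m' + n') (by omega) m' n' k' rfl).1]
                have h1 : bFormula (m'+1) n' (k'+1)
                    = Nat.choose m' k' * Nat.choose n' (k'+1) := by simp [bFormula]
                have h2 : bFormula (m'+1) (n'+1) (k'+1)
                    = Nat.choose m' k' * Nat.choose (n'+1) (k'+1) := by simp [bFormula]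
                rw [h1, h2, Nat.choose_succ_succ n' k']
                ring
    refine ⟨?_, hB⟩
    rw [W_card_split, hB]
    cases m with
    | zero =>
        rw [D_zero]
        simp only [Set.ncard_empty, zero_add]
        unfold bFormula
        rcases k with _ | k' <;> simp
    | succ m' =>
        rw [D_succ, Set.ncard_image_of_injective _ List.cons_injective]
        rw [(IH (m' + n) (by omega) m' n k rfl).1]
        rcases k with _ | k'
        · simp [bFormula]
        · have h1 : bFormula (m'+1) n (k'+1)
              = Nat.choose m' k' * Nat.choose n (k'+1) := by simp [bFormula]
          rw [h1, Nat.choose_succ_succ m' k']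
          ring

theorem Wset_ncard (m n k : ℕ) :
    (Wset m n k).ncard = Nat.choose m k * Nat.choose n k :=
  (main_count (m+n) m n k rfl).1

theorem card_latticePaths_with_turns (a a' e e' : ℤ) (h : a ≤ e) (h' : a' ≤ e') (k : ℕ) :
    Nat.card {P : List (ℤ × ℤ) // IsLatticePath (a, a') (e, e') P ∧ numNETurns P = k}
      = Nat.choose (e - a).toNat k * Nat.choose (e' - a').toNat k := by
  classical
  set m := (e - a).toNat with hm
  set n := (e' - a').toNat with hn
  have hma : (m : ℤ) = e - a := Int.toNat_of_nonneg (by omega)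
  have hna : (n : ℤ) = e' - a' := Int.toNat_of_nonneg (by omega)
  let φ : (Wset m n k) →
      {P : List (ℤ × ℤ) // IsLatticePath (a, a') (e, e') P ∧ numNETurns P = k} :=
    fun w => ⟨pathOf (a, a') w.1, by
      obtain ⟨h1, h2, h3⟩ := w.2
      refine ⟨⟨pathOf_head _ _, ?_, pathOf_chain _ _⟩, ?_⟩
      · rw [pathOf_getLast, h1, h2, hma, hna]
        congr 1
        simp only [Prod.ext_iff, Prod.fst_add, Prod.snd_add]
        constructor <;> ring
      · rw [numNETurns_pathOf, h3]⟩
  have hbij : Function.Bijective φ := by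
    constructor
    · intro w1 w2 hww
      exact Subtype.ext (pathOf_inj _ (congrArg Subtype.val hww))
    · rintro ⟨P, ⟨hhead, hlast, hchain⟩, hturns⟩
      obtain ⟨w, hw⟩ := exists_word P (by rintro rfl; simp at hhead) hchain (a, a') hhead
      have hlast' : (a, a') + ((w.count false : ℤ), (w.count true : ℤ)) = (e, e') := by
        have h2 := pathOf_getLast (a, a') w
        rw [hw, hlast] at h2
        exact (Option.some.inj h2).symm
      have hcF : w.count false = m := by
        have h2 : (w.count false : ℤ) = e - a := by
          have := congrArg Prod.fst hlast'
          simp at this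
          omega
        rw [← h2] at hma
        exact_mod_cast hma.symm
      have hcT : w.count true = n := by
        have h2 : (w.count true : ℤ) = e' - a' := by
          have := congrArg Prod.snd hlast'
          simp at this
          omega
        rw [← h2] at hna
        exact_mod_cast hna.symm
      refine ⟨⟨w, hcF, hcT, ?_⟩, Subtype.ext hw⟩
      rw [← numNETurns_pathOf w (a, a'), hw]
      exact hturns
  calc Nat.card {P : List (ℤ × ℤ) // IsLatticePath (a, a') (e, e') P ∧ numNETurns P = k}
      = Nat.card (Wset m n k) := (Nat.card_eq_of_bijective φ hbij).symm
    _ = (Wset m n k).ncard := Nat.card_coe_set_eq _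
    _ = Nat.choose m k * Nat.choose n k := Wset_ncard m n k
end

section
/- Let m, n be integers with 2 < m ≤ n and let k ≥ 1 be an integer. Define, for integers t₁, t₂: P(t₁,t₂) = C(m−1,t₁)C(n−1,t₁)C(m−1,t₂)C(n−1,t₂); P₁(t₁,t₂) = C(m−1,t₁)C(n−2,t₁)C(m−1,t₂)C(n−2,t₂); P₂(t₁,t₂) = C(m−1,t₂+1)C(n−2,t₂)C(m−1,t₁−1)C(n−2,t₁); P₃(t₁,t₂) = C(m,t₂)C(n,t₁+1)C(m−1,t₁)C(n−2,t₂−1); P₄(t₁,t₂) = C(m−1,t₁)C(n,t₂)C(m−1,t₂−1)C(n−2,t₁). Then the sum over all pairs of integers (t₁,t₂) with t₁+t₂ = k of [P₁(t₁,t₂) − P₂(t₁,t₂) + P₃(t₁,t₂) − P₄(t₁,t₂) − P(t₁,t₂)] equals 0. -/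
lemma C_pascal (s a : ℤ) : C s a = C (s - 1) a + C (s - 1) (a - 1) := by
  rcases lt_trichotomy a 0 with h | h | h
  · rw [C_of_neg h, C_of_neg h, C_of_neg (by omega : a - 1 < 0)]; ring
  · subst h; simp [C]
  · obtain ⟨j, rfl⟩ : ∃ j : ℕ, a = (j : ℤ) + 1 := ⟨(a - 1).toNat, by omega⟩
    unfold C
    rw [if_neg (by omega), if_neg (by omega), if_neg (by omega)]
    rw [show ((j : ℤ) + 1).toNat = j + 1 by omega, show ((j : ℤ) + 1 - 1).toNat = j by omega]
    rw [Finset.prod_range_succ' (fun i => ((s : ℚ) - i)) j]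
    rw [Finset.prod_range_succ (fun i => (((s - 1 : ℤ) : ℚ) - i)) j]
    have hcong : (∏ i ∈ Finset.range j, ((s : ℚ) - (i + 1 : ℕ)))
        = ∏ i ∈ Finset.range j, (((s - 1 : ℤ) : ℚ) - i) := by
      apply Finset.prod_congr rfl
      intro i _
      push_cast
      ring
    rw [hcong]
    have hfac : (((j + 1).factorial : ℚ)) = (j + 1) * (j.factorial : ℚ) := by
      rw [Nat.factorial_succ]; push_cast; ring
    have hne : (j.factorial : ℚ) ≠ 0 := Nat.cast_ne_zero.2 (Nat.factorial_ne_zero j)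
    have hne2 : ((j : ℚ) + 1) ≠ 0 := by positivity
    rw [hfac]
    field_simp
    push_cast
    ring

/-- The basic monomial family. -/
noncomputable def Nmon (m n k a b c d t : ℤ) : ℚ :=
  C (m - 1) (t + a) * C (n - 2) (t + b) * C (m - 1) (k - t + c) * C (n - 2) (k - t + d)

/-- Its (finite) sum over all integers. -/
noncomputable def T (m n k a b c d : ℤ) : ℚ := ∑ᶠ t : ℤ, Nmon m n k a b c d t

lemma Nmon_eq_zero {m n k a b c d t : ℤ} (h : t + a < 0 ∨ k - t + c < 0) :
    Nmon m n k a b c d t = 0 := by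
  unfold Nmon
  rcases h with h | h
  · rw [C_of_neg h]; ring
  · rw [C_of_neg h]; ring

lemma T_eq_sum (m n k a b c d : ℤ) (ha : a ≤ 2) (hc : c ≤ 2) :
    T m n k a b c d = ∑ t ∈ Finset.Icc (-2 : ℤ) (k + 2), Nmon m n k a b c d t := by
  apply finsum_eq_finset_sum_of_support_subset
  intro t ht
  simp only [Finset.coe_Icc, Set.mem_Icc]
  by_contra hcon
  exact ht (Nmon_eq_zero (by omega))

lemma T_shift (m n k a b c d a' b' c' d' : ℤ)
    (h1 : a' = a + 1) (h2 : b' = b + 1) (h3 : c' = c - 1) (h4 : d' = d - 1) :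
    T m n k a b c d = T m n k a' b' c' d' := by
  subst h1; subst h2; subst h3; subst h4
  unfold T
  calc (∑ᶠ t : ℤ, Nmon m n k a b c d t)
      = ∑ᶠ t : ℤ, Nmon m n k (a + 1) (b + 1) (c - 1) (d - 1) (Equiv.subRight (1 : ℤ) t) := by
        apply finsum_congr
        intro t
        simp only [Equiv.subRight_apply]
        unfold Nmon
        rw [show t - 1 + (a + 1) = t + a by ring, show t - 1 + (b + 1) = t + b by ring,
          show k - (t - 1) + (c - 1) = k - t + c by ring,
          show k - (t - 1) + (d - 1) = k - t + d by ring]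
    _ = ∑ᶠ t : ℤ, Nmon m n k (a + 1) (b + 1) (c - 1) (d - 1) t := finsum_comp_equiv _

lemma T_refl (m n k a b c d : ℤ) : T m n k a b c d = T m n k c d a b := by
  unfold T
  calc (∑ᶠ t : ℤ, Nmon m n k a b c d t)
      = ∑ᶠ t : ℤ, Nmon m n k c d a b (Equiv.subLeft k t) := by
        apply finsum_congr
        intro t
        simp only [Equiv.subLeft_apply]
        unfold Nmon
        rw [show k - (k - t) + a = t + a by ring, show k - (k - t) + b = t + b by ring]
        ring
    _ = ∑ᶠ t : ℤ, Nmon m n k c d a b t := finsum_comp_equiv _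

theorem key_identity (m n k : ℤ) (hm : 2 < m) (hmn : m ≤ n) (hk : 1 ≤ k) :
    (∑ᶠ t₁ : ℤ,
      (C (m - 1) t₁ * C (n - 2) t₁ * C (m - 1) (k - t₁) * C (n - 2) (k - t₁)
        - C (m - 1) ((k - t₁) + 1) * C (n - 2) (k - t₁) * C (m - 1) (t₁ - 1) * C (n - 2) t₁
        + C m (k - t₁) * C n (t₁ + 1) * C (m - 1) t₁ * C (n - 2) ((k - t₁) - 1)
        - C (m - 1) t₁ * C n (k - t₁) * C (m - 1) ((k - t₁) - 1) * C (n - 2) t₁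
        - C (m - 1) t₁ * C (n - 1) t₁ * C (m - 1) (k - t₁) * C (n - 1) (k - t₁)))
      = 0 := by
  have hm' := C_pascal m
  have hn' := C_pascal n
  have hn1 : ∀ x : ℤ, C (n - 1) x = C (n - 2) x + C (n - 2) (x - 1) := by
    intro x
    have h := C_pascal (n - 1) x
    rwa [show n - 1 - 1 = n - 2 by ring] at h
  have hsupp : Function.support (fun t₁ : ℤ =>
      (C (m - 1) t₁ * C (n - 2) t₁ * C (m - 1) (k - t₁) * C (n - 2) (k - t₁)
        - C (m - 1) ((k - t₁) + 1) * C (n - 2) (k - t₁) * C (m - 1) (t₁ - 1) * C (n - 2) t₁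
        + C m (k - t₁) * C n (t₁ + 1) * C (m - 1) t₁ * C (n - 2) ((k - t₁) - 1)
        - C (m - 1) t₁ * C n (k - t₁) * C (m - 1) ((k - t₁) - 1) * C (n - 2) t₁
        - C (m - 1) t₁ * C (n - 1) t₁ * C (m - 1) (k - t₁) * C (n - 1) (k - t₁)))
      ⊆ ↑(Finset.Icc (-2 : ℤ) (k + 2)) := by
    intro t ht
    simp only [Finset.coe_Icc, Set.mem_Icc]
    by_contra hcon
    apply ht
    rcases (by omega : t < 0 ∨ k < t) with h | h
    · have hz : ∀ s' : ℤ, C s' t = 0 := fun s' => C_of_neg h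
      simp only [hz]
      ring
    · have hz : ∀ s' : ℤ, C s' (k - t) = 0 := fun s' => C_of_neg (by omega)
      have hz2 : ∀ s' : ℤ, C s' (k - t - 1) = 0 := fun s' => C_of_neg (by omega)
      simp only [hz, hz2]
      ring
  rw [finsum_eq_finset_sum_of_support_subset _ hsupp]
  have h2 : ∀ t ∈ Finset.Icc (-2 : ℤ) (k + 2),
      (C (m - 1) t * C (n - 2) t * C (m - 1) (k - t) * C (n - 2) (k - t)
        - C (m - 1) ((k - t) + 1) * C (n - 2) (k - t) * C (m - 1) (t - 1) * C (n - 2) t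
        + C m (k - t) * C n (t + 1) * C (m - 1) t * C (n - 2) ((k - t) - 1)
        - C (m - 1) t * C n (k - t) * C (m - 1) ((k - t) - 1) * C (n - 2) t
        - C (m - 1) t * C (n - 1) t * C (m - 1) (k - t) * C (n - 1) (k - t))
      = (Nmon m n k 0 0 0 0 t
        - Nmon m n k (-1) 0 1 0 t
        + Nmon m n k 0 1 0 (-1) t + Nmon m n k 0 0 0 (-1) t + Nmon m n k 0 0 0 (-1) t
        + Nmon m n k 0 (-1) 0 (-1) t + Nmon m n k 0 1 (-1) (-1) t
        + Nmon m n k 0 0 (-1) (-1) t + Nmon m n k 0 0 (-1) (-1) t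
        + Nmon m n k 0 (-1) (-1) (-1) t
        - Nmon m n k 0 0 (-1) 0 t - Nmon m n k 0 0 (-1) (-1) t
        - Nmon m n k 0 0 (-1) (-1) t - Nmon m n k 0 0 (-1) (-2) t
        - Nmon m n k 0 0 0 0 t - Nmon m n k 0 0 0 (-1) t
        - Nmon m n k 0 (-1) 0 0 t - Nmon m n k 0 (-1) 0 (-1) t) := by
    intro t _
    simp only [Nmon, hm', hn', hn1]
    ring_nf
  rw [Finset.sum_congr rfl h2]
  simp only [Finset.sum_add_distrib, Finset.sum_sub_distrib]
  have E1 : (∑ t ∈ Finset.Icc (-2 : ℤ) (k + 2), Nmon m n k (-1) 0 1 0 t)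
      = ∑ t ∈ Finset.Icc (-2 : ℤ) (k + 2), Nmon m n k 0 1 0 (-1) t := by
    rw [← T_eq_sum m n k (-1) 0 1 0 (by norm_num) (by norm_num),
      ← T_eq_sum m n k 0 1 0 (-1) (by norm_num) (by norm_num)]
    exact T_shift m n k (-1) 0 1 0 0 1 0 (-1) (by norm_num) (by norm_num) (by norm_num)
      (by norm_num)
  have E2 : (∑ t ∈ Finset.Icc (-2 : ℤ) (k + 2), Nmon m n k 0 (-1) 0 0 t)
      = ∑ t ∈ Finset.Icc (-2 : ℤ) (k + 2), Nmon m n k 0 0 0 (-1) t := by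
    rw [← T_eq_sum m n k 0 (-1) 0 0 (by norm_num) (by norm_num),
      ← T_eq_sum m n k 0 0 0 (-1) (by norm_num) (by norm_num)]
    exact T_refl m n k 0 (-1) 0 0
  have E3 : (∑ t ∈ Finset.Icc (-2 : ℤ) (k + 2), Nmon m n k 0 1 (-1) (-1) t)
      = ∑ t ∈ Finset.Icc (-2 : ℤ) (k + 2), Nmon m n k 0 0 (-1) 0 t := by
    rw [← T_eq_sum m n k 0 1 (-1) (-1) (by norm_num) (by norm_num),
      ← T_eq_sum m n k 0 0 (-1) 0 (by norm_num) (by norm_num)]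
    exact (T_shift m n k (-1) 0 0 0 0 1 (-1) (-1) (by norm_num) (by norm_num) (by norm_num)
      (by norm_num)).symm.trans (T_refl m n k (-1) 0 0 0)
  have E4 : (∑ t ∈ Finset.Icc (-2 : ℤ) (k + 2), Nmon m n k 0 (-1) (-1) (-1) t)
      = ∑ t ∈ Finset.Icc (-2 : ℤ) (k + 2), Nmon m n k 0 0 (-1) (-2) t := by
    rw [← T_eq_sum m n k 0 (-1) (-1) (-1) (by norm_num) (by norm_num),
      ← T_eq_sum m n k 0 0 (-1) (-2) (by norm_num) (by norm_num)]
    exact (T_shift m n k (-1) (-2) 0 0 0 (-1) (-1) (-1) (by norm_num) (by norm_num)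
      (by norm_num) (by norm_num)).symm.trans (T_refl m n k (-1) (-2) 0 0)
  rw [E1, E2, E3, E4]
  ring
end

section
/- Let m, n be integers with 2 ≤ m ≤ n. The polynomial h(z) = (Σ_{e=0}^{m−1} C(m−1,e)·C(n−1,e)·z^e)² is a palindromic polynomial (i.e., h(z) = z^{2(m−1)}·h(1/z)) if and only if m = n. -/
open Polynomial Finset

private lemma key_refl (m : ℕ) (hm : 1 ≤ m) (a : ℕ → ℚ) (z : ℚ) (hz : z ≠ 0) :
    z ^ (m - 1) * ∑ e ∈ Finset.range m, a e * z⁻¹ ^ e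
      = ∑ e ∈ Finset.range m, a (m - 1 - e) * z ^ e := by
  rw [← Finset.sum_range_reflect (fun e => a (m - 1 - e) * z ^ e) m, Finset.mul_sum]
  refine Finset.sum_congr rfl fun e he => ?_
  have he' : e ≤ m - 1 := by
    have := Finset.mem_range.mp he; omega
  rw [Nat.sub_sub_self he']
  have hsplit : z ^ (m - 1) = z ^ (m - 1 - e) * z ^ e := by
    rw [← pow_add]; congr 1; omega
  rw [hsplit]
  have : z ^ e * z⁻¹ ^ e = 1 := by
    rw [← mul_pow, mul_inv_cancel₀ hz, one_pow]
  calc z ^ (m - 1 - e) * z ^ e * (a e * z⁻¹ ^ e)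
      = a e * z ^ (m - 1 - e) * (z ^ e * z⁻¹ ^ e) := by ring
    _ = a e * z ^ (m - 1 - e) := by rw [this, mul_one]

private lemma sum_eval_zero (m : ℕ) (hm : 1 ≤ m) (a : ℕ → ℚ) :
    ∑ e ∈ Finset.range m, a e * (0 : ℚ) ^ e = a 0 := by
  rw [Finset.sum_eq_single_of_mem 0 (Finset.mem_range.mpr (by omega))]
  · simp
  · intro e _ hne
    rw [zero_pow hne, mul_zero]

private lemma choose_gt_one {N k : ℕ} (h1 : 1 ≤ k) (h2 : k < N) : 1 < N.choose k := by
  have := Nat.choose_le_choose k (show k + 1 ≤ N by omega)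
  rw [Nat.choose_succ_self_right] at this
  omega

theorem palindromic_iff_gorenstein (m n : ℕ) (hm : 2 ≤ m) (hmn : m ≤ n)
    (h : ℚ → ℚ)
    (hh : ∀ z : ℚ, h z =
      (∑ e ∈ Finset.range m, (Nat.choose (m - 1) e : ℚ) * (Nat.choose (n - 1) e : ℚ) * z ^ e) ^ 2) :
    (∀ z : ℚ, z ≠ 0 → h z = z ^ (2 * (m - 1)) * h z⁻¹) ↔ m = n := by
  set a : ℕ → ℚ := fun e => (Nat.choose (m - 1) e : ℚ) * (Nat.choose (n - 1) e : ℚ) with ha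
  have hm1 : 1 ≤ m := by omega
  have hrhs : ∀ z : ℚ, z ≠ 0 →
      z ^ (2 * (m - 1)) * h z⁻¹ = (∑ e ∈ Finset.range m, a (m - 1 - e) * z ^ e) ^ 2 := by
    intro z hz
    rw [hh z⁻¹, two_mul, pow_add, ← key_refl m hm1 a z hz, mul_pow]
    simp only [ha]
    ring
  constructor
  · intro hp
    -- polynomial setup
    set P : Polynomial ℚ := ∑ e ∈ Finset.range m, C (a e) * X ^ e with hP
    set Q : Polynomial ℚ := ∑ e ∈ Finset.range m, C (a (m - 1 - e)) * X ^ e with hQ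
    have hPe : ∀ z : ℚ, P.eval z = ∑ e ∈ Finset.range m, a e * z ^ e := by
      intro z; rw [hP]; simp [Polynomial.eval_finset_sum]
    have hQe : ∀ z : ℚ, Q.eval z = ∑ e ∈ Finset.range m, a (m - 1 - e) * z ^ e := by
      intro z; rw [hQ]; simp [Polynomial.eval_finset_sum]
    have hD : X * (P ^ 2 - Q ^ 2) = 0 := by
      apply Polynomial.funext
      intro z
      rcases eq_or_ne z 0 with rfl | hz
      · simp
      · have := hp z hz
        rw [hh z, hrhs z hz] at this
        simp only [Polynomial.eval_mul, Polynomial.eval_sub, Polynomial.eval_pow,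
          Polynomial.eval_X, Polynomial.eval_zero, hPe, hQe]
        rw [this]; ring
    have hsq : (P - Q) * (P + Q) = 0 := by
      have hX : (X : Polynomial ℚ) ≠ 0 := Polynomial.X_ne_zero
      have := (mul_eq_zero.mp hD).resolve_left hX
      linear_combination this
    have hpos1 : 0 < P.eval 1 := by
      rw [hPe]
      apply Finset.sum_pos'
      · intro e _; positivity
      · exact ⟨0, Finset.mem_range.mpr (by omega), by simp [ha]⟩
    have hpos2 : 0 < Q.eval 1 := by
      rw [hQe]
      apply Finset.sum_pos'
      · intro e _; positivity
      · refine ⟨m - 1, Finset.mem_range.mpr (by omega), ?_⟩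
        simp [ha]
    have hPQ : P = Q := by
      rcases mul_eq_zero.mp hsq with h1 | h1
      · exact sub_eq_zero.mp h1
      · exfalso
        have : P.eval 1 + Q.eval 1 = 0 := by
          rw [← Polynomial.eval_add, h1, Polynomial.eval_zero]
        linarith
    have h0 : P.eval 0 = Q.eval 0 := by rw [hPQ]
    rw [hPe, hQe, sum_eval_zero m hm1, sum_eval_zero m hm1] at h0
    have h0' : (1 : ℚ) = (Nat.choose (n - 1) (m - 1) : ℚ) := by
      simpa [ha, Nat.sub_self] using h0
    have hnat : Nat.choose (n - 1) (m - 1) = 1 := by exact_mod_cast h0'.symm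
    by_contra hne
    have hlt : m - 1 < n - 1 := by omega
    have := choose_gt_one (show 1 ≤ m - 1 by omega) hlt
    omega
  · intro heq
    subst heq
    intro z hz
    rw [hh z, hrhs z hz]
    congr 1
    refine Finset.sum_congr rfl fun e he => ?_
    have he' : e ≤ m - 1 := by
      have := Finset.mem_range.mp he; omega
    have hsym : Nat.choose (m - 1) (m - 1 - e) = Nat.choose (m - 1) e :=
      Nat.choose_symm he'
    simp [ha, hsym]
end

section
/- Let m, n be integers with 2 < m ≤ n. The rational function H(z) = (Σ_{e=0}^{m−1} C(m−1,e)C(n−1,e) z^e)² / (1−z)^{2(m+n−1)} satisfies (−1)^{2(m+n−1)} H(1/z) = (Σ_{e=0}^{m−1} C(m−1,e)C(n−1,e) z^{m+n−e−1})² / (1−z)^{2(m+n−1)}; in particular the order of the pole of H at infinity is 2n, i.e., the a-invariant of the corresponding graded ring is −2n. -/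
theorem hilbert_series_canonical_module (m n : ℕ) (hm : 2 < m) (hmn : m ≤ n)
    (H : ℚ → ℚ)
    (hH : ∀ z : ℚ, z ≠ 1 → H z =
      (∑ e ∈ Finset.range m, (Nat.choose (m - 1) e : ℚ) * (Nat.choose (n - 1) e : ℚ) * z ^ e) ^ 2
        / (1 - z) ^ (2 * (m + n - 1))) :
    ∀ z : ℚ, z ≠ 0 → z ≠ 1 →
      (-1 : ℚ) ^ (2 * (m + n - 1)) * H z⁻¹ =
        (∑ e ∈ Finset.range m,
            (Nat.choose (m - 1) e : ℚ) * (Nat.choose (n - 1) e : ℚ) * z ^ (m + n - e - 1)) ^ 2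
          / (1 - z) ^ (2 * (m + n - 1)) := by
  intro z hz0 hz1
  have hz1' : z⁻¹ ≠ 1 := fun h => hz1 (by rwa [inv_eq_one] at h)
  rw [hH z⁻¹ hz1']
  have heven : Even (2 * (m + n - 1)) := even_two_mul _
  rw [heven.neg_one_pow, one_mul]
  have hb : (1 - z⁻¹) ≠ 0 := sub_ne_zero.mpr (Ne.symm hz1')
  have hbz : (1 - z) ≠ 0 := sub_ne_zero.mpr (Ne.symm hz1)
  have key : (∑ e ∈ Finset.range m,
      (Nat.choose (m - 1) e : ℚ) * (Nat.choose (n - 1) e : ℚ) * (z⁻¹) ^ e) * z ^ (m + n - 1) =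
      ∑ e ∈ Finset.range m,
        (Nat.choose (m - 1) e : ℚ) * (Nat.choose (n - 1) e : ℚ) * z ^ (m + n - e - 1) := by
    rw [Finset.sum_mul]
    refine Finset.sum_congr rfl fun e he => ?_
    have hem : e < m := Finset.mem_range.mp he
    have h1 : m + n - 1 = e + (m + n - e - 1) := by omega
    rw [mul_assoc, inv_pow]
    congr 1
    rw [h1, pow_add, ← mul_assoc, inv_mul_cancel₀ (pow_ne_zero _ hz0), one_mul]
  have hden : ((1 - z⁻¹) * z) ^ (2 * (m + n - 1)) = (1 - z) ^ (2 * (m + n - 1)) := by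
    have h2 : (1 - z⁻¹) * z = -(1 - z) := by field_simp; ring
    rw [h2, heven.neg_pow]
  have hT : (∑ e ∈ Finset.range m,
      (Nat.choose (m - 1) e : ℚ) * (Nat.choose (n - 1) e : ℚ) * z ^ (m + n - e - 1)) ^ 2 =
      (∑ e ∈ Finset.range m,
        (Nat.choose (m - 1) e : ℚ) * (Nat.choose (n - 1) e : ℚ) * (z⁻¹) ^ e) ^ 2 *
        z ^ (2 * (m + n - 1)) := by
    rw [← key, mul_pow, pow_mul']
  rw [div_eq_div_iff (pow_ne_zero _ hb) (pow_ne_zero _ hbz), hT, ← hden, mul_pow]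
  ring
end
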